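/- arXiv:1906.12133 — 2 statements merged into one kernel-verified Lean document; each statement's English description precedes it below -/
import Mathlib

section
/- Let S^sym be the WSTTS of a signal σ and a TSWA W. For any symbolic states (l,Z₁,ā),(l',Z₁',ā') ∈ Q^sym with ((l,Z₁,ā),(l',Z₁',ā')) ∈ →^sym, and any (l,Z₂,ā) ∈ Q^sym with Z₁ ⊆ Z₂, there exists (l',Z₂',ā') ∈ Q^sym such that Z₁' ⊆ Z₂' and ((l,Z₂,ā),(l',Z₂',ā')) ∈ →^sym. -/
attribute [local instance] Classical.propDecidable

namespace QTPM

/-- Comparison operators `<, ≤, >, ≥` used in constraints, guards and zones. -/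
inductive CmpOp : Type
  | lt | le | gt | ge

/-- Semantics of a comparison operator on reals. -/
def CmpOp.eval : CmpOp → ℝ → ℝ → Prop
  | .lt, a, b => a < b
  | .le, a, b => a ≤ b
  | .gt, a, b => a > b
  | .ge, a, b => a ≥ b

/-- A semiring `𝕊 = (S, ⊕, ⊗, e⊕, e⊗)`: `(S,⊕,e⊕)` a commutative monoid,
`(S,⊗,e⊗)` a monoid, `⊗` distributing over `⊕` on both sides, `e⊕` absorbing for `⊗`. -/
class CSemiring (S : Type) : Type where
  add : S → S → S
  mul : S → S → S
  zero : S
  one : S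
  add_assoc : ∀ a b c : S, add (add a b) c = add a (add b c)
  add_comm : ∀ a b : S, add a b = add b a
  add_zero : ∀ a : S, add a zero = a
  mul_assoc : ∀ a b c : S, mul (mul a b) c = mul a (mul b c)
  mul_one : ∀ a : S, mul a one = a
  one_mul : ∀ a : S, mul one a = a
  left_distrib : ∀ a b c : S, mul a (add b c) = add (mul a b) (mul a c)
  right_distrib : ∀ a b c : S, mul (add a b) c = add (mul a c) (mul b c)
  zero_mul : ∀ a : S, mul zero a = zero
  mul_zero : ∀ a : S, mul a zero = zero

/-- A semiring is idempotent if `s ⊕ s = s` for every `s`. -/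
def Idem (S : Type) [CSemiring S] : Prop := ∀ s : S, CSemiring.add s s = s

/-- The canonical order of a semiring: `s ⪯ s'` iff `s ⊕ s' = s'`. -/
def csLe {S : Type} [CSemiring S] (s s' : S) : Prop := CSemiring.add s s' = s'

/-- A complete semiring: every (possibly infinite) family has a sum `⊕`, extending the
binary sum, invariant under partitions of the index set, and over which `⊗` distributes
on both sides. -/
class CompleteCSemiring (S : Type) [CSemiring S] : Type 1 where
  iSum : {ι : Type} → (ι → S) → S
  iSum_empty : ∀ f : Empty → S, iSum f = CSemiring.zero
  iSum_single : ∀ f : Unit → S, iSum f = f ()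
  iSum_pair : ∀ f : Bool → S, iSum f = CSemiring.add (f true) (f false)
  iSum_partition : ∀ {ι κ : Type} (p : ι → κ) (f : ι → S),
    iSum f = iSum fun k : κ => iSum fun i : {i : ι // p i = k} => f i.1
  mul_iSum : ∀ {ι : Type} (s : S) (f : ι → S),
    CSemiring.mul s (iSum f) = iSum fun i => CSemiring.mul s (f i)
  iSum_mul : ∀ {ι : Type} (f : ι → S) (s : S),
    CSemiring.mul (iSum f) s = iSum fun i => CSemiring.mul (f i) s

/-- A piecewise-constant signal `σ = a₁^{τ₁} ⋯ a_n^{τ_n}`: a finite list of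
(value, duration) pairs with positive durations. -/
structure Signal (X : Type) : Type where
  entries : List ((X → ℝ) × ℝ)
  pos : ∀ e ∈ entries, (0:ℝ) < e.2

namespace Signal

variable {X : Type}

/-- A default entry, used as a fallback value for out-of-range indexing. -/
noncomputable def dflt (X : Type) : (X → ℝ) × ℝ := (fun _ => 0, 1)

/-- Prefix sums of the durations: `pref σ i = τ₁ + ⋯ + τᵢ`. -/
noncomputable def pref (σ : Signal X) (i : ℕ) : ℝ := ((σ.entries.take i).map Prod.snd).sum

/-- The duration `|σ| = τ₁ + ⋯ + τ_n` of a signal. -/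
noncomputable def dur (σ : Signal X) : ℝ := (σ.entries.map Prod.snd).sum

/-- The number `n` of entries of the signal. -/
def len (σ : Signal X) : ℕ := σ.entries.length

/-- The value `a_{i+1}` of the `i`-th entry (0-indexed). -/
noncomputable def val (σ : Signal X) (i : ℕ) : X → ℝ := (σ.entries.getD i (dflt X)).1

/-- The value `σ(t)` of the signal at time `t`: the value `a_k` where
`τ₁+⋯+τ_{k-1} ≤ t < τ₁+⋯+τ_k`. -/
noncomputable def valAt (σ : Signal X) (t : ℝ) : X → ℝ :=
  σ.val ((List.range σ.len).findIdx fun i => decide (t < σ.pref (i+1)))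

end Signal

/-- Stutter-free sequences: the elements of `(ℝ^X)^⊛` (no two equal consecutive values). -/
def StutterFree {V : Type} (l : List V) : Prop := l.Chain' (· ≠ ·)

/-- Absorbing concatenation `∘` of (stutter-free) sequences: concatenate and merge
equal consecutive elements. -/
noncomputable def absCat {V : Type} (l l' : List V) : List V :=
  List.destutter (· ≠ ·) (l ++ l')

/-- `Values(σ([t,t')))`: the stutter-free sequence of values of `σ` on the
interval `[t,t')`. -/
noncomputable def Signal.valuesOn {X : Type} (σ : Signal X) (t t' : ℝ) : List (X → ℝ) :=
  List.destutter (· ≠ ·)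
    (((List.range σ.len).filter fun i => decide (σ.pref i < t' ∧ t < σ.pref (i+1))).map σ.val)

/-- The restriction `σ([t,t'))` of a signal to the interval `[t,t')`. -/
noncomputable def Signal.restrict {X : Type} (σ : Signal X) (t t' : ℝ) : Signal X where
  entries := (List.range σ.len).filterMap fun i =>
    if h : max (σ.pref i) t < min (σ.pref (i+1)) t' then
      some (σ.val i, min (σ.pref (i+1)) t' - max (σ.pref i) t)
    else none
  pos := by
    intro e he
    rw [List.mem_filterMap] at he
    obtain ⟨i, -, hi⟩ := he
    by_cases h : max (σ.pref i) t < min (σ.pref (i+1)) t'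
    · rw [dif_pos h] at hi
      injection hi with h'
      subst h'
      simpa using sub_pos.mpr h
    · rw [dif_neg h] at hi
      exact absurd hi (by simp)

/-- The constant signal `a^t`. -/
noncomputable def constSignal {X : Type} (a : X → ℝ) (t : ℝ) : Signal X where
  entries := if h : (0:ℝ) < t then [(a, t)] else []
  pos := by
    intro e he
    by_cases h : (0:ℝ) < t
    · rw [dif_pos h] at he
      simp only [List.mem_singleton] at he
      subst he
      exact h
    · rw [dif_neg h] at he
      simp at he

/-- Clock guards: finite conjunctions of `c ⋈ d` with `d ∈ ℤ≥0`. -/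
abbrev Guard (C : Type) : Type := List (C × CmpOp × ℕ)

/-- Constraints over the variables `X`: finite conjunctions of `x ⋈ d` with `d ∈ ℝ`. -/
abbrev VarConstraint (X : Type) : Type := List (X × CmpOp × ℝ)

/-- A timed symbolic automaton (TSA) over `ℝ`, with locations `L` and clocks `C`. -/
structure TSA (X L C : Type) : Type where
  L₀ : Set L
  LF : Set L
  Δ : Set (L × Guard C × Set C × L)
  Δ_finite : Δ.Finite
  Λ : L → VarConstraint X

/-- A timed symbolic weighted automaton (TSWA) over `ℝ` and a complete semiring `S`:
a TSA together with a cost function `κ`. -/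
structure TSWA (X L C S : Type) [CSemiring S] [CompleteCSemiring S]
    extends TSA X L C : Type where
  κ : VarConstraint X → List (X → ℝ) → S

/-- Satisfaction `ν ⊨ g` of a clock guard. -/
def guardSat {C : Type} (ν : C → ℝ) (g : Guard C) : Prop :=
  ∀ p ∈ g, p.2.1.eval (ν p.1) (p.2.2 : ℝ)

/-- The reset `ν[ρ := 0]` of a clock valuation. -/
noncomputable def resetVal {C : Type} (ν : C → ℝ) (ρ : Set C) : C → ℝ :=
  fun c => if c ∈ ρ then 0 else ν c

/-- States of the WTTS: `(l, ν, t, ā)`. -/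
abbrev WState (X L C : Type) : Type := L × (C → ℝ) × ℝ × List (X → ℝ)

/-- The state space `Q` of the WTTS of `σ` and a TSWA. -/
def wttsQ {X L C : Type} (σ : Signal X) : Set (WState X L C) :=
  {q | (∀ c, 0 ≤ q.2.1 c) ∧ 0 ≤ q.2.2.1 ∧ q.2.2.1 ≤ σ.dur ∧ StutterFree q.2.2.2}

/-- The initial states `Q₀ = {(l₀, 0⃗, 0, ε) | l₀ ∈ L₀}` of the WTTS. -/
def wttsQ0 {X L C : Type} (A : TSA X L C) : Set (WState X L C) :=
  {q | q.1 ∈ A.L₀ ∧ q.2.1 = (fun _ => 0) ∧ q.2.2.1 = 0 ∧ q.2.2.2 = []}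

/-- The accepting states `Q_F = {(l_F, ν, |σ|, ε) | l_F ∈ L_F}` of the WTTS. -/
def wttsQF {X L C : Type} (σ : Signal X) (A : TSA X L C) : Set (WState X L C) :=
  {q | q.1 ∈ A.LF ∧ (∀ c, 0 ≤ q.2.1 c) ∧ q.2.2.1 = σ.dur ∧ q.2.2.2 = []}

/-- The transition relation `→` of the WTTS of `σ` and (the TSA of) a TSWA:
either a discrete transition of the TSA, or time elapse. -/
def wttsStep {X L C : Type} (σ : Signal X) (A : TSA X L C)
    (q q' : WState X L C) : Prop :=
  q ∈ wttsQ σ ∧ q' ∈ wttsQ σ ∧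
  ((∃ g ρ, (q.1, g, ρ, q'.1) ∈ A.Δ ∧ guardSat q.2.1 g ∧ q'.2.1 = resetVal q.2.1 ρ ∧
      q'.2.2.1 = q.2.2.1 ∧ q.2.2.2 ≠ [] ∧ q'.2.2.2 = []) ∨
   (q.1 = q'.1 ∧ ∃ τ : ℝ, 0 < τ ∧ q'.2.1 = (fun c => q.2.1 c + τ) ∧
      q'.2.2.1 = q.2.2.1 + τ ∧
      q'.2.2.2 = absCat q.2.2.2 (σ.valuesOn q.2.2.1 (q.2.2.1 + τ))))

/-- The weight of a WTTS transition: `κ(Λ(l), ā)` if `ā' = ε`, and `e⊗` otherwise. -/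
noncomputable def wttsWeight {X L C S : Type} [CSemiring S] [CompleteCSemiring S]
    (W : TSWA X L C S) (q q' : WState X L C) : S :=
  if q'.2.2.2 = [] then W.κ (W.Λ q.1) q.2.2.2 else CSemiring.one

/-- A path of a transition system: a finite sequence of states related by
consecutive transitions. -/
def IsPath {Q : Type} (step : Q → Q → Prop) (π : List Q) : Prop := π.Chain' step

/-- The path value: the `⊗`-product of the weights of the transitions of a path. -/
noncomputable def pathVal {Q S : Type} [CSemiring S] [CompleteCSemiring S]
    (w : Q → Q → S) : List Q → S
  | [] => CSemiring.one
  | [_] => CSemiring.one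
  | q :: q' :: r => CSemiring.mul (w q q') (pathVal w (q' :: r))

/-- The set of paths from a state of `A` to a state of `B`. -/
def PathsBetween {Q : Type} (step : Q → Q → Prop) (A B : Set Q) : Set (List Q) :=
  {π | IsPath step π ∧ (∃ a ∈ A, π.head? = some a) ∧ (∃ b ∈ B, π.getLast? = some b)}

/-- The shortest distance from `A` to `B`: the `⊕`-sum, over all paths from `A` to `B`,
of the `⊗`-product of the transition weights. -/
noncomputable def sDist {Q S : Type} [CSemiring S] [CompleteCSemiring S]
    (step : Q → Q → Prop) (w : Q → Q → S) (A B : Set Q) : S :=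
  CompleteCSemiring.iSum fun π : ↥(PathsBetween step A B) => pathVal w π.1

/-- The trace value `α(S)` of the WTTS `S` of `σ` and `W`: the shortest distance from
the initial states to the accepting states, i.e. `⊕_{π ∈ ARuns(S)} μ(π)`. -/
noncomputable def traceValue {X L C S : Type} [CSemiring S] [CompleteCSemiring S]
    (σ : Signal X) (W : TSWA X L C S) : S :=
  sDist (wttsStep σ W.toTSA) (wttsWeight W) (wttsQ0 W.toTSA) (wttsQF σ W.toTSA)

/-- The clocks `C ⊔ {T}`: `none` is the fresh clock `T` tracking absolute time. -/
abbrev ClockT (C : Type) : Type := Option C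

/-- Symbolic states of the WSTTS: `(l, Z, ā)`. -/
abbrev SymState (X L C : Type) : Type := L × Set (ClockT C → ℝ) × List (X → ℝ)

/-- A zone over the clock set `C'`: a set of clock valuations defined by a finite
conjunction of constraints `c ⋈ d` and `c − c' ⋈ d`. -/
def IsZone {C' : Type} (Z : Set (C' → ℝ)) : Prop :=
  ∃ atoms : List ((C' × CmpOp × ℝ) ⊕ (C' × C' × CmpOp × ℝ)),
    Z = {ν | ∀ a ∈ atoms,
      match a with
      | .inl p => p.2.1.eval (ν p.1) p.2.2
      | .inr p => p.2.2.1.eval (ν p.1 - ν p.2.1) p.2.2.2}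

/-- The symbolic state space `Q^sym` of the WSTTS of `σ` and a TSWA. -/
def symQ {X L C : Type} (σ : Signal X) : Set (SymState X L C) :=
  {q | IsZone q.2.1 ∧ q.2.1.Nonempty ∧ (∀ ν ∈ q.2.1, ν none ≤ σ.dur) ∧
    StutterFree q.2.2 ∧
    (q.2.2 = [] ∨ ∀ ν ∈ q.2.1, absCat q.2.2 [σ.valAt (ν none)] = q.2.2)}

/-- The all-zero clock valuation over `C ⊔ {T}`. -/
noncomputable def zeroValT {C : Type} : ClockT C → ℝ := fun _ => 0

/-- The initial symbolic states `Q₀^sym = {(l₀, {0⃗}, ε) | l₀ ∈ L₀}`. -/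
def symQ0 {X L C : Type} (A : TSA X L C) : Set (SymState X L C) :=
  {q | q.1 ∈ A.L₀ ∧ q.2.1 = {zeroValT} ∧ q.2.2 = []}

/-- The accepting symbolic states
`Q_F^sym = {(l_F, Z, ε) ∈ Q^sym | ∃ν ∈ Z, ν(T) = |σ|}`. -/
def symQF {X L C : Type} (σ : Signal X) (A : TSA X L C) : Set (SymState X L C) :=
  {q | q ∈ symQ σ ∧ q.1 ∈ A.LF ∧ q.2.2 = [] ∧ ∃ ν ∈ q.2.1, ν none = σ.dur}

/-- The reset `ν[ρ := 0]` of a valuation over `C ⊔ {T}` (the clock `T` is never reset). -/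
noncomputable def symResetVal {C : Type} (ν : ClockT C → ℝ) (ρ : Set C) : ClockT C → ℝ :=
  fun c => match c with
    | none => ν none
    | some c' => if c' ∈ ρ then 0 else ν (some c')

/-- The up-closure `{ν + τ | ν ∈ Z, τ > 0}` of a zone under time elapse. -/
def upClosure {C : Type} (Z : Set (ClockT C → ℝ)) : Set (ClockT C → ℝ) :=
  {ν' | ∃ ν ∈ Z, ∃ τ : ℝ, 0 < τ ∧ ν' = fun c => ν c + τ}

/-- The transition relation `→^sym` of the WSTTS of `σ` and (the TSA of) a TSWA:
a discrete transition of the TSA, a punctual time elapse, or a non-punctual time elapse. -/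
def symStep {X L C : Type} (σ : Signal X) (A : TSA X L C)
    (q q' : SymState X L C) : Prop :=
  q ∈ symQ σ ∧ q' ∈ symQ σ ∧
  ((∃ g ρ, (q.1, g, ρ, q'.1) ∈ A.Δ ∧
      q'.2.1 = {ν' | ∃ ν ∈ q.2.1, guardSat (fun c => ν (some c)) g ∧ ν' = symResetVal ν ρ} ∧
      q.2.2 ≠ [] ∧ q'.2.2 = []) ∨
   (q.1 = q'.1 ∧
      (∃ ν ∈ q.2.1, ∃ ν' ∈ q'.2.1, q'.2.2 = absCat q.2.2 (σ.valuesOn (ν none) (ν' none))) ∧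
      (∃ i, 1 ≤ i ∧ i ≤ σ.len ∧
        (q'.2.1 = upClosure q.2.1 ∩ {ν | ν none = σ.pref i} ∨
         q'.2.1 = upClosure q.2.1 ∩ {ν | σ.pref (i-1) < ν none ∧ ν none < σ.pref i}))))

/-- The weight of a WSTTS transition: `κ(Λ(l), ā)` if `ā' = ε`, and `e⊗` otherwise. -/
noncomputable def symWeight {X L C S : Type} [CSemiring S] [CompleteCSemiring S]
    (W : TSWA X L C S) (q q' : SymState X L C) : S :=
  if q'.2.2 = [] then W.κ (W.Λ q.1) q.2.2 else CSemiring.one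

/-- The symbolic trace value `α^sym(S^sym)`: the shortest distance from the initial
symbolic states to the accepting symbolic states, i.e. `⊕_{π ∈ ARuns(S^sym)} μ^sym(π)`. -/
noncomputable def symTraceValue {X L C S : Type} [CSemiring S] [CompleteCSemiring S]
    (σ : Signal X) (W : TSWA X L C S) : S :=
  sDist (symStep σ W.toTSA) (symWeight W) (symQ0 W.toTSA) (symQF σ W.toTSA)

/-- `Reach`: the initial states together with all states reachable from them. -/
def reach {Q : Type} (step : Q → Q → Prop) (init : Set Q) : Set Q :=
  {q | ∃ q0 ∈ init, Relation.ReflTransGen step q0 q}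

/-- Tuples `(l, Z, ā, s)` occurring in intermediate weights. -/
abbrev WTuple (X L C S : Type) : Type := L × Set (ClockT C → ℝ) × List (X → ℝ) × S

/-- The increment function `incr(a,t)`: maps a set `w` of tuples `(l,Z,ā,s)` to the set
of tuples `(l',Z',ā',s')` such that every `ν' ∈ Z'` satisfies `ν'(T) = t` and
`s' = ⊕_{(l,Z,ā,s)∈w} s ⊗ Dist({(l,Z,ā)},{(l',Z',ā')})` computed in the WSTTS of the
constant signal `a^t` and `W`. -/
noncomputable def incr {X L C S : Type} [CSemiring S] [CompleteCSemiring S]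
    (W : TSWA X L C S) (a : X → ℝ) (t : ℝ)
    (w : Set (WTuple X L C S)) : Set (WTuple X L C S) :=
  {p | IsZone p.2.1 ∧ StutterFree p.2.2.1 ∧ (∀ ν ∈ p.2.1, ν none = t) ∧
    p.2.2.2 = CompleteCSemiring.iSum fun q : ↥w =>
      CSemiring.mul q.1.2.2.2
        (sDist (symStep (constSignal a t) W.toTSA) (symWeight W)
          ({(q.1.1, q.1.2.1, q.1.2.2.1)} : Set (SymState X L C))
          ({(p.1, p.2.1, p.2.2.1)} : Set (SymState X L C)))}

/-- The intermediate weight `weight_i = (incr(a_i,T_i) ∘ ⋯ ∘ incr(a₁,T₁))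
({(l₀,{0⃗},ε,e⊗) | l₀ ∈ L₀})`, where `T_j = τ₁ + ⋯ + τ_j`. -/
noncomputable def weightSeq {X L C S : Type} [CSemiring S] [CompleteCSemiring S]
    (σ : Signal X) (W : TSWA X L C S) : ℕ → Set (WTuple X L C S)
  | 0 => {p | p.1 ∈ W.L₀ ∧ p.2.1 = {zeroValT} ∧ p.2.2.1 = [] ∧ p.2.2.2 = CSemiring.one}
  | i + 1 => incr W (σ.val i) (σ.pref (i+1)) (weightSeq σ W i)

/-- The extension of a clock valuation over `C` to `C ⊔ {T}`, assigning `t` to `T`. -/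
def extT {C : Type} (ν : C → ℝ) (t : ℝ) : ClockT C → ℝ :=
  fun c => match c with
    | none => t
    | some c' => ν c'

/-- The restriction `ν|_C` of a clock valuation over `C ⊔ {T}` to `C`. -/
def restrC {C : Type} (ν : ClockT C → ℝ) : C → ℝ := fun c => ν (some c)

/-- The extension of a clock valuation over `C ⊔ {T}` to `C ⊔ {T, 0}`, where the
reference clock `0` (encoded as `none`) has constant value `0`. -/
def extRef {C : Type} (ν : ClockT C → ℝ) : Option (ClockT C) → ℝ :=
  fun c => match c with
    | none => 0
    | some c' => ν c'

/-- The canonical bound `d_{Z,c,c'}` of a zone: the least constant bounding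
`ν(c) − ν(c')` over `Z` (with `∞ = ⊤` when unbounded). -/
noncomputable def zoneBound {C : Type} (Z : Set (ClockT C → ℝ))
    (c c' : Option (ClockT C)) : EReal :=
  sSup ((fun ν => ((extRef ν c - extRef ν c' : ℝ) : EReal)) '' Z)

end QTPM
namespace QTPM


-- ===== Auxiliary development: Fourier–Motzkin elimination over difference constraints =====

/-- Difference atom: `u b - u b' < d` (strict) or `≤ d`. -/
abbrev DAtom (β : Type) := β × β × Bool × ℝ

def dsat {β : Type} (u : β → ℝ) (a : DAtom β) : Prop :=
  if a.2.2.1 then u a.1 - u a.2.1 < a.2.2.2 else u a.1 - u a.2.1 ≤ a.2.2.2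

def ssat {β : Type} (u : β → ℝ) (L : List (DAtom β)) : Prop := ∀ a ∈ L, dsat u a

lemma dsat_congr {β : Type} {u v : β → ℝ} {a : DAtom β}
    (h1 : u a.1 = v a.1) (h2 : u a.2.1 = v a.2.1) : dsat u a ↔ dsat v a := by
  simp [dsat, h1, h2]

lemma dsat_shift {β : Type} (u : β → ℝ) (t : ℝ) (a : DAtom β) :
    dsat (fun b => u b + t) a ↔ dsat u a := by
  obtain ⟨b, b', s, d⟩ := a
  simp only [dsat]
  have : u b + t - (u b' + t) = u b - u b' := by ring
  rw [this]

lemma ssat_shift {β : Type} (u : β → ℝ) (t : ℝ) (L : List (DAtom β)) :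
    ssat (fun b => u b + t) L ↔ ssat u L := by
  unfold ssat; exact forall₂_congr fun a _ => dsat_shift u t a

def mapVar {β γ : Type} (f : β → γ) (a : DAtom β) : DAtom γ := (f a.1, f a.2.1, a.2.2)

lemma dsat_mapVar {β γ : Type} (f : β → γ) (u : γ → ℝ) (a : DAtom β) :
    dsat u (mapVar f a) ↔ dsat (u ∘ f) a := Iff.rfl

lemma ssat_mapVar {β γ : Type} (f : β → γ) (u : γ → ℝ) (L : List (DAtom β)) :
    ssat u (L.map (mapVar f)) ↔ ssat (u ∘ f) L := by
  constructor
  · intro hs a ha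
    exact (dsat_mapVar f u a).mp (hs _ (List.mem_map_of_mem ha))
  · intro hs a ha
    obtain ⟨b, hb, rfl⟩ := List.mem_map.mp ha
    exact (dsat_mapVar f u b).mpr (hs b hb)

lemma list_argmax {α : Type} (f : α → ℝ) {l : List α} (h : l ≠ []) :
    ∃ p ∈ l, ∀ q ∈ l, f q ≤ f p := by
  induction l with
  | nil => exact absurd rfl h
  | cons a l ih =>
    rcases eq_or_ne l [] with rfl | hne
    · exact ⟨a, by simp⟩
    · obtain ⟨p, hp, hmax⟩ := ih hne
      rcases le_total (f p) (f a) with hle | hle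
      · refine ⟨a, List.mem_cons_self, fun q hq => ?_⟩
        rcases List.mem_cons.mp hq with rfl | hq
        · exact le_rfl
        · exact (hmax q hq).trans hle
      · refine ⟨p, List.mem_cons_of_mem _ hp, fun q hq => ?_⟩
        rcases List.mem_cons.mp hq with rfl | hq
        · exact hle
        · exact hmax q hq

lemma exists_lt_all {α : Type} (f : α → ℝ) (l : List α) : ∃ t : ℝ, ∀ q ∈ l, t < f q := by
  induction l with
  | nil => exact ⟨0, by simp⟩
  | cons a l ih =>
    obtain ⟨t, ht⟩ := ih
    refine ⟨min t (f a - 1), fun q hq => ?_⟩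
    rcases List.mem_cons.mp hq with rfl | hq
    · exact (min_le_right _ _).trans_lt (by linarith)
    · exact (min_le_left _ _).trans_lt (ht q hq)

lemma exists_all_lt {α : Type} (f : α → ℝ) (l : List α) : ∃ t : ℝ, ∀ q ∈ l, f q < t := by
  obtain ⟨t, ht⟩ := exists_lt_all (fun a => -(f a)) l
  exact ⟨-t, fun q hq => by have : t < -(f q) := ht q hq; linarith⟩

/-- Separation: pairwise-compatible lower and upper bounds admit a point between. -/
lemma exists_sep (lows ups : List (ℝ × Bool))
    (h : ∀ p ∈ lows, ∀ q ∈ ups, if p.2 || q.2 then p.1 < q.1 else p.1 ≤ q.1) :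
    ∃ t : ℝ, (∀ p ∈ lows, if p.2 then p.1 < t else p.1 ≤ t) ∧
             (∀ q ∈ ups, if q.2 then t < q.1 else t ≤ q.1) := by
  rcases eq_or_ne lows [] with rfl | hl
  · obtain ⟨t, ht⟩ := exists_lt_all Prod.fst ups
    exact ⟨t, by simp, fun q hq => by have := ht q hq; split <;> linarith⟩
  rcases eq_or_ne ups [] with rfl | hu
  · obtain ⟨t, ht⟩ := exists_all_lt Prod.fst lows
    exact ⟨t, fun p hp => by have := ht p hp; split <;> linarith, by simp⟩
  obtain ⟨p₀, hp₀, hpmax⟩ := list_argmax Prod.fst hl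
  obtain ⟨q₀, hq₀, hqmax'⟩ := list_argmax (fun q => -(q.1 : ℝ)) hu
  have hqmin : ∀ q ∈ ups, q₀.1 ≤ q.1 := fun q hq => by have := hqmax' q hq; simp at this; linarith
  have hAB : p₀.1 ≤ q₀.1 := by have := h p₀ hp₀ q₀ hq₀; split at this <;> linarith
  rcases lt_or_eq_of_le hAB with hlt | heq
  · refine ⟨(p₀.1 + q₀.1) / 2, fun p hp => ?_, fun q hq => ?_⟩
    · have := hpmax p hp; split <;> linarith
    · have := hqmin q hq; split <;> linarith
  · refine ⟨p₀.1, fun p hp => ?_, fun q hq => ?_⟩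
    · cases hs : p.2 with
      | false => simpa [hs] using hpmax p hp
      | true =>
        have := h p hp q₀ hq₀
        rw [hs] at this; simp at this
        simp [hs]; linarith
    · cases hs : q.2 with
      | false =>
        have := hqmin q hq
        simp [hs]; linarith
      | true =>
        have := h p₀ hp₀ q hq
        rw [hs] at this; simp at this
        simp [hs]; linarith


/-- Fourier–Motzkin elimination of the variable `x`; `z` is a spare variable
(`z ≠ x`) used to express infeasibility. -/
noncomputable def elimVar {β : Type} (z x : β) (L : List (DAtom β)) : List (DAtom β) :=
  (L.filter fun a => decide (a.1 ≠ x ∧ a.2.1 ≠ x))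
  ++ ((L.filter fun a => decide (a.1 ≠ x ∧ a.2.1 = x)).flatMap fun a =>
       (L.filter fun b => decide (b.1 = x ∧ b.2.1 ≠ x)).map fun b =>
         ((a.1, b.2.1, a.2.2.1 || b.2.2.1, a.2.2.2 + b.2.2.2) : DAtom β))
  ++ (if ∃ a ∈ L, a.1 = x ∧ a.2.1 = x ∧ ¬ dsat (fun _ => (0:ℝ)) a
      then [((z, z, true, 0) : DAtom β)] else [])

lemma dsat_self {β : Type} {a : DAtom β} (h : a.1 = a.2.1) (u : β → ℝ) :
    dsat u a ↔ dsat (fun _ => (0:ℝ)) a := by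
  obtain ⟨b1, b2, s, d⟩ := a
  dsimp at h; subst h
  simp [dsat]

lemma elimVar_iff {β : Type} (z x : β) (L : List (DAtom β)) (u : β → ℝ) :
    ssat u (elimVar z x L) ↔ ∃ t, ssat (Function.update u x t) L := by
  constructor
  · intro hs
    have hnobad : ¬ ∃ a ∈ L, a.1 = x ∧ a.2.1 = x ∧ ¬ dsat (fun _ => (0:ℝ)) a := by
      intro hbad
      have hmem : ((z, z, true, 0) : DAtom β) ∈ elimVar z x L := by
        unfold elimVar
        rw [if_pos hbad]
        simp
      have := hs _ hmem
      simp [dsat] at this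
    set lowsA := L.filter fun a => decide (a.1 ≠ x ∧ a.2.1 = x) with hlowsA
    set upsA := L.filter fun b => decide (b.1 = x ∧ b.2.1 ≠ x) with hupsA
    set lows : List (ℝ × Bool) := lowsA.map (fun a => (u a.1 - a.2.2.2, a.2.2.1)) with hlows
    set ups : List (ℝ × Bool) := upsA.map (fun b => (u b.2.1 + b.2.2.2, b.2.2.1)) with hups
    have hpair : ∀ p ∈ lows, ∀ q ∈ ups, if p.2 || q.2 then p.1 < q.1 else p.1 ≤ q.1 := by
      intro p hp q hq
      obtain ⟨a, ha, rfl⟩ := List.mem_map.mp hp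
      obtain ⟨b, hb, rfl⟩ := List.mem_map.mp hq
      have hmem : ((a.1, b.2.1, a.2.2.1 || b.2.2.1, a.2.2.2 + b.2.2.2) : DAtom β)
          ∈ elimVar z x L := by
        unfold elimVar
        refine List.mem_append_left _ (List.mem_append_right _ ?_)
        rw [List.mem_flatMap]
        exact ⟨a, ha, List.mem_map.mpr ⟨b, hb, rfl⟩⟩
      have hd := hs _ hmem
      simp only [dsat] at hd
      dsimp only at hd ⊢
      by_cases hc : (a.2.2.1 || b.2.2.1) = true
      · rw [if_pos hc] at hd ⊢; linarith
      · rw [if_neg hc] at hd ⊢; linarith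
    obtain ⟨t, htl, htu⟩ := exists_sep lows ups hpair
    refine ⟨t, fun a ha => ?_⟩
    by_cases h1 : a.1 = x <;> by_cases h2 : a.2.1 = x
    · rw [dsat_self (h1.trans h2.symm)]
      by_contra hbb
      exact hnobad ⟨a, ha, h1, h2, hbb⟩
    · -- upper bound atom: a.1 = x, a.2.1 ≠ x
      have hb : a ∈ upsA := by
        rw [hupsA, List.mem_filter]; exact ⟨ha, by simp [h1, h2]⟩
      have hd := htu _ (List.mem_map.mpr ⟨a, hb, rfl⟩)
      dsimp only at hd
      have e1 : Function.update u x t a.1 = t := by rw [h1]; simp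
      have e2 : Function.update u x t a.2.1 = u a.2.1 := Function.update_of_ne h2 _ _
      simp only [dsat, e1, e2]
      by_cases hc : a.2.2.1 = true
      · rw [if_pos hc] at hd ⊢; linarith
      · rw [if_neg hc] at hd ⊢; linarith
    · -- lower bound atom: a.1 ≠ x, a.2.1 = x
      have hb : a ∈ lowsA := by
        rw [hlowsA, List.mem_filter]; exact ⟨ha, by simp [h1, h2]⟩
      have hd := htl _ (List.mem_map.mpr ⟨a, hb, rfl⟩)
      dsimp only at hd
      have e1 : Function.update u x t a.1 = u a.1 := Function.update_of_ne h1 _ _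
      have e2 : Function.update u x t a.2.1 = t := by rw [h2]; simp
      simp only [dsat, e1, e2]
      by_cases hc : a.2.2.1 = true
      · rw [if_pos hc] at hd ⊢; linarith
      · rw [if_neg hc] at hd ⊢; linarith
    · have hmem : a ∈ elimVar z x L := by
        unfold elimVar
        refine List.mem_append_left _ (List.mem_append_left _ ?_)
        rw [List.mem_filter]; exact ⟨ha, by simp [h1, h2]⟩
      have hd := hs _ hmem
      rwa [dsat_congr (u := u) (v := Function.update u x t)
        (Function.update_of_ne h1 _ _).symm (Function.update_of_ne h2 _ _).symm] at hd
  · rintro ⟨t, ht⟩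
    intro a ha
    unfold elimVar at ha
    rcases List.mem_append.mp ha with ha' | ha'
    · rcases List.mem_append.mp ha' with ha'' | ha''
      · -- untouched
        obtain ⟨haL, hflags⟩ := List.mem_filter.mp ha''
        simp only [decide_eq_true_eq] at hflags
        have hd := ht a haL
        rwa [dsat_congr (Function.update_of_ne hflags.1 _ _)
          (Function.update_of_ne hflags.2 _ _)] at hd
      · -- combined
        rw [List.mem_flatMap] at ha''
        obtain ⟨a1, ha1, hmem⟩ := ha''
        obtain ⟨b1, hb1, rfl⟩ := List.mem_map.mp hmem
        obtain ⟨ha1L, hf1⟩ := List.mem_filter.mp ha1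
        obtain ⟨hb1L, hf2⟩ := List.mem_filter.mp hb1
        simp only [decide_eq_true_eq] at hf1 hf2
        have h1 := ht a1 ha1L
        have h2 := ht b1 hb1L
        simp only [dsat] at h1 h2 ⊢
        rw [hf1.2] at h1
        rw [hf2.1] at h2
        rw [Function.update_of_ne hf1.1, Function.update_self] at h1
        rw [Function.update_of_ne hf2.2, Function.update_self] at h2
        by_cases c1 : a1.2.2.1 = true
        · rw [if_pos c1] at h1
          rw [if_pos (by rw [c1]; rfl)]
          by_cases c2 : b1.2.2.1 = true
          · rw [if_pos c2] at h2; linarith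
          · rw [if_neg c2] at h2; linarith
        · rw [if_neg c1] at h1
          by_cases c2 : b1.2.2.1 = true
          · rw [if_pos c2] at h2
            rw [if_pos (by rw [c2]; simp)]
            linarith
          · rw [if_neg c2] at h2
            rw [if_neg (by rw [Bool.or_eq_true]; tauto)]
            linarith
    · -- infeasibility atom: contradiction
      split at ha'
      · rename_i hbad
        obtain ⟨b, hbL, hb1, hb2, hbb⟩ := hbad
        have hd := ht b hbL
        rw [dsat_self (hb1.trans hb2.symm)] at hd
        exact absurd hd hbb
      · simp at ha'


lemma elimVar_iff' {β : Type} (z x : β) (L : List (DAtom β)) (u : β → ℝ) :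
    ssat u (elimVar z x L) ↔ ∃ v : β → ℝ, (∀ b, b ≠ x → v b = u b) ∧ ssat v L := by
  rw [elimVar_iff z x L u]
  constructor
  · rintro ⟨t, ht⟩
    exact ⟨Function.update u x t, fun b hb => Function.update_of_ne hb _ _, ht⟩
  · rintro ⟨v, hv, hs⟩
    refine ⟨v x, ?_⟩
    have : Function.update u x (v x) = v := by
      funext b
      by_cases hb : b = x
      · subst hb; simp
      · rw [Function.update_of_ne hb, hv b hb]
    rwa [this]


/-- Successive elimination of a list of variables. -/
noncomputable def elimList {β : Type} (z : β) (xs : List β) (L : List (DAtom β)) :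
    List (DAtom β) :=
  xs.foldr (fun x M => elimVar z x M) L

lemma elimList_cons {β : Type} (z x : β) (xs : List β) (L : List (DAtom β)) :
    elimList z (x :: xs) L = elimVar z x (elimList z xs L) := rfl

lemma elimList_iff {β : Type} (z : β) (xs : List β) (L : List (DAtom β)) (u : β → ℝ) :
    ssat u (elimList z xs L) ↔ ∃ v : β → ℝ, (∀ b, b ∉ xs → v b = u b) ∧ ssat v L := by
  induction xs generalizing u with
  | nil =>
    constructor
    · intro hs; exact ⟨u, fun _ _ => rfl, hs⟩
    · rintro ⟨v, hv, hs⟩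
      have : v = u := funext fun b => hv b List.not_mem_nil
      rwa [this] at hs
  | cons x xs ih =>
    rw [elimList_cons, elimVar_iff']
    constructor
    · rintro ⟨w, hw, hsw⟩
      obtain ⟨v, hv, hs⟩ := (ih _).mp hsw
      refine ⟨v, fun b hb => ?_, hs⟩
      rw [List.mem_cons] at hb
      push_neg at hb
      rw [hv b hb.2, hw b hb.1]
    · rintro ⟨v, hv, hs⟩
      classical
      refine ⟨fun b => if b = x then v x else u b, fun b hb => if_neg hb, ?_⟩
      refine (ih _).mpr ⟨v, fun b hb => ?_, hs⟩
      by_cases hbx : b = x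
      · subst hbx; simp
      · rw [if_neg hbx]
        exact hv b (by simp [hbx, hb])


-- ==== zone atoms ====

abbrev ZAtom (C' : Type) := (C' × CmpOp × ℝ) ⊕ (C' × C' × CmpOp × ℝ)

def asat {C' : Type} (ν : C' → ℝ) (a : ZAtom C') : Prop :=
  match a with
  | .inl p => p.2.1.eval (ν p.1) p.2.2
  | .inr p => p.2.2.1.eval (ν p.1 - ν p.2.1) p.2.2.2

lemma isZone_iff {C' : Type} (Z : Set (C' → ℝ)) :
    IsZone Z ↔ ∃ atoms : List (ZAtom C'), Z = {ν | ∀ a ∈ atoms, asat ν a} := Iff.rfl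

noncomputable def atomToD {C' : Type} (a : ZAtom C') : DAtom (Option C') :=
  match a with
  | .inl (c, .lt, d) => (some c, none, true, d)
  | .inl (c, .le, d) => (some c, none, false, d)
  | .inl (c, .gt, d) => (none, some c, true, -d)
  | .inl (c, .ge, d) => (none, some c, false, -d)
  | .inr (c, c', .lt, d) => (some c, some c', true, d)
  | .inr (c, c', .le, d) => (some c, some c', false, d)
  | .inr (c, c', .gt, d) => (some c', some c, true, -d)
  | .inr (c, c', .ge, d) => (some c', some c, false, -d)

lemma atomToD_iff {C : Type} (ν : ClockT C → ℝ) (a : ZAtom (ClockT C)) :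
    dsat (extRef ν) (atomToD a) ↔ asat ν a := by
  rcases a with ⟨c, op, d⟩ | ⟨c, c', op, d⟩ <;> cases op <;>
    simp [atomToD, dsat, asat, CmpOp.eval, extRef] <;>
    constructor <;> intro h <;> linarith

noncomputable def dToAtoms {C : Type} (a : DAtom (Option (ClockT C))) : List (ZAtom (ClockT C)) :=
  match a with
  | (some c, some c', s, d) => [.inr (c, c', if s then .lt else .le, d)]
  | (some c, none, s, d) => [.inl (c, if s then .lt else .le, d)]
  | (none, some c, s, d) => [.inl (c, if s then .gt else .ge, -d)]
  | (none, none, s, d) =>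
      if (if s then (0:ℝ) < d else (0:ℝ) ≤ d) then []
      else [.inl ((none : ClockT C), .lt, 0), .inl ((none : ClockT C), .gt, 0)]

lemma dToAtoms_iff {C : Type} (ν : ClockT C → ℝ) (a : DAtom (Option (ClockT C))) :
    (∀ b ∈ dToAtoms a, asat ν b) ↔ dsat (extRef ν) a := by
  obtain ⟨b, b', s, d⟩ := a
  match b, b' with
  | some c, some c' =>
    cases s <;> simp [dToAtoms, dsat, asat, CmpOp.eval, extRef]
  | some c, none =>
    cases s <;> simp [dToAtoms, dsat, asat, CmpOp.eval, extRef]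
  | none, some c =>
    cases s <;> simp [dToAtoms, dsat, asat, CmpOp.eval, extRef] <;>
      constructor <;> intro h <;> linarith
  | none, none =>
    by_cases hc : (if s then (0:ℝ) < d else (0:ℝ) ≤ d)
    · rw [dToAtoms, if_pos hc]
      cases s <;> simp [dsat, extRef] <;> simpa using hc
    · rw [dToAtoms, if_neg hc]
      apply iff_of_false
      · intro h
        have h1 := h (.inl (none, .lt, 0)) (by simp)
        have h2 := h (.inl (none, .gt, 0)) (by simp)
        simp [asat, CmpOp.eval] at h1 h2
        linarith
      · intro h
        apply hc
        cases s <;> simpa [dsat, extRef] using h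

lemma zone_ssat {C : Type} (Z : Set (ClockT C → ℝ)) :
    IsZone Z ↔ ∃ L : List (DAtom (Option (ClockT C))), Z = {ν | ssat (extRef ν) L} := by
  rw [isZone_iff]
  constructor
  · rintro ⟨atoms, rfl⟩
    refine ⟨atoms.map atomToD, Set.ext fun ν => ?_⟩
    simp only [Set.mem_setOf_eq, ssat]
    constructor
    · intro h a ha
      obtain ⟨b, hb, rfl⟩ := List.mem_map.mp ha
      exact (atomToD_iff ν b).mpr (h b hb)
    · intro h b hb
      exact (atomToD_iff ν b).mp (h _ (List.mem_map_of_mem hb))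
  · rintro ⟨L, rfl⟩
    refine ⟨L.flatMap dToAtoms, Set.ext fun ν => ?_⟩
    simp only [Set.mem_setOf_eq, ssat]
    constructor
    · intro h b hb
      obtain ⟨a, ha, hba⟩ := List.mem_flatMap.mp hb
      exact (dToAtoms_iff ν a).mpr (h a ha) b hba
    · intro h a ha
      exact (dToAtoms_iff ν a).mp (fun b hb => h b (List.mem_flatMap.mpr ⟨a, ha, hb⟩)) 


lemma ssat_append {β : Type} (u : β → ℝ) (L M : List (DAtom β)) :
    ssat u (L ++ M) ↔ ssat u L ∧ ssat u M := by
  unfold ssat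
  constructor
  · intro h
    exact ⟨fun a ha => h a (List.mem_append_left _ ha),
           fun a ha => h a (List.mem_append_right _ ha)⟩
  · rintro ⟨h1, h2⟩ a ha
    rcases List.mem_append.mp ha with ha | ha
    · exact h1 a ha
    · exact h2 a ha

/-- Zones are closed under guard intersection followed by clock reset. -/
lemma isZone_reset {C : Type} [Finite C] {Z : Set (ClockT C → ℝ)} (hZ : IsZone Z)
    (g : Guard C) (ρ : Set C) :
    IsZone {ν' | ∃ ν ∈ Z, guardSat (fun c => ν (some c)) g ∧ ν' = symResetVal ν ρ} := by
  obtain ⟨LZ, hLZ⟩ := (zone_ssat Z).mp hZ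
  classical
  set ρL : List C := (Set.toFinite ρ).toFinset.toList with hρL
  have hmemρ : ∀ c : C, c ∈ ρL ↔ c ∈ ρ := by
    intro c; rw [hρL, Finset.mem_toList, Set.Finite.mem_toFinset]
  set xs : List (Option (ClockT C)) :=
    ρL.map (fun c => (some (some c) : Option (ClockT C))) with hxs
  have hxs_mem : ∀ b : Option (ClockT C), b ∈ xs ↔ ∃ c ∈ ρ, b = some (some c) := by
    intro b
    rw [hxs, List.mem_map]
    constructor
    · rintro ⟨c, hc, rfl⟩; exact ⟨c, (hmemρ c).mp hc, rfl⟩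
    · rintro ⟨c, hc, rfl⟩; exact ⟨c, (hmemρ c).mpr hc, rfl⟩
  set LY : List (DAtom (Option (ClockT C))) :=
    LZ ++ g.map (fun p => atomToD (.inl (some p.1, p.2.1, (p.2.2 : ℝ)))) with hLY
  set L' : List (DAtom (Option (ClockT C))) :=
    elimList none xs LY
      ++ ρL.flatMap (fun c =>
          [((some (some c), none, false, 0) : DAtom (Option (ClockT C))),
           ((none, some (some c), false, 0) : DAtom (Option (ClockT C)))]) with hL'
  rw [zone_ssat]
  refine ⟨L', Set.ext fun ν' => ?_⟩
  rw [Set.mem_setOf_eq, Set.mem_setOf_eq, hL', ssat_append]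
  constructor
  · rintro ⟨ν, hνZ, hg, rfl⟩
    constructor
    · rw [elimList_iff]
      refine ⟨extRef ν, fun b hb => ?_, ?_⟩
      · -- extRef ν agrees with extRef (reset ν ρ) off xs
        match b with
        | none => rfl
        | some none => rfl
        | some (some c) =>
          have hcρ : c ∉ ρ := fun hc => hb ((hxs_mem _).mpr ⟨c, hc, rfl⟩)
          show ν (some c) = symResetVal ν ρ (some c)
          simp [symResetVal, hcρ]
      · -- extRef ν satisfies LY
        rw [hLY, ssat_append]
        refine ⟨by rw [hLZ] at hνZ; exact hνZ, ?_⟩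
        intro a ha
        obtain ⟨p, hp, rfl⟩ := List.mem_map.mp ha
        exact (atomToD_iff ν _).mpr (hg p hp)
    · -- zero atoms
      intro a ha
      obtain ⟨c, hc, hca⟩ := List.mem_flatMap.mp ha
      have hcρ : c ∈ ρ := (hmemρ c).mp hc
      have hval : symResetVal ν ρ (some c) = 0 := by simp [symResetVal, hcρ]
      rcases List.mem_cons.mp hca with rfl | hca'
      · simp [dsat, extRef, hval]
      · rcases List.mem_cons.mp hca' with rfl | h
        · simp [dsat, extRef, hval]
        · simp at h
  · rintro ⟨helim, hzero⟩
    rw [elimList_iff] at helim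
    obtain ⟨v, hv, hvLY⟩ := helim
    have hvnone : v none = 0 := hv none (by
      intro hmem; obtain ⟨c, _, hc⟩ := (hxs_mem _).mp hmem; cases hc)
    set ν : ClockT C → ℝ := fun k => v (some k) with hν
    have hext : extRef ν = v := by
      funext b; match b with
      | none => exact hvnone.symm
      | some k => rfl
    rw [hLY, ssat_append, ← hext] at hvLY
    refine ⟨ν, ?_, ?_, ?_⟩
    · rw [hLZ]; exact hvLY.1
    · intro p hp
      exact (atomToD_iff ν _).mp (hvLY.2 _ (List.mem_map_of_mem hp))
    · funext k
      match k with
      | none =>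
        show ν' none = ν none
        have := hv (some none) (by
          intro hmem; obtain ⟨c, _, hc⟩ := (hxs_mem _).mp hmem
          cases hc)
        exact this.symm
      | some c =>
        by_cases hcρ : c ∈ ρ
        · have hcL := (hmemρ c).mpr hcρ
          have h1 := hzero _ (List.mem_flatMap.mpr ⟨c, hcL, List.mem_cons_self⟩)
          have h2 := hzero _ (List.mem_flatMap.mpr
            ⟨c, hcL, List.mem_cons_of_mem _ (List.mem_cons_self)⟩)
          simp only [dsat, extRef] at h1 h2
          norm_num at h1 h2
          show ν' (some c) = symResetVal ν ρ (some c)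
          simp [symResetVal, hcρ]
          linarith
        · have := hv (some (some c)) (by
            intro hmem
            obtain ⟨c', hc', hcc⟩ := (hxs_mem _).mp hmem
            obtain rfl : c = c' := Option.some.inj (Option.some.inj hcc)
            exact hcρ hc')
          show ν' (some c) = symResetVal ν ρ (some c)
          simp only [symResetVal, if_neg hcρ]
          exact this.symm


lemma mem_upClosure_iff {C : Type} (Z : Set (ClockT C → ℝ)) (ν' : ClockT C → ℝ) :
    ν' ∈ upClosure Z ↔ ∃ t : ℝ, 0 < t ∧ (fun k => ν' k - t) ∈ Z := by
  constructor
  · rintro ⟨ν, hν, τ, hτ, rfl⟩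
    refine ⟨τ, hτ, ?_⟩
    have : (fun k => ν k + τ - τ) = ν := by funext k; ring
    rwa [this]
  · rintro ⟨t, ht, hm⟩
    exact ⟨_, hm, t, ht, by funext k; ring⟩

/-- Zones are closed under up-closure intersected with an extra difference system. -/
lemma isZone_up {C : Type} {Z : Set (ClockT C → ℝ)} (hZ : IsZone Z)
    (M : List (DAtom (Option (ClockT C)))) :
    IsZone (upClosure Z ∩ {ν | ssat (extRef ν) M}) := by
  obtain ⟨LZ, hLZ⟩ := (zone_ssat Z).mp hZ
  -- β: none = reference 0, some none = the elapse amount τ, some (some k) = clock k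
  set L₁ : List (DAtom (Option (Option (ClockT C)))) :=
    LZ.map (mapVar some) ++ M.map (mapVar (Option.map some))
      ++ [((none, some none, true, 0) : DAtom (Option (Option (ClockT C))))] with hL₁
  set ψ : Option (Option (ClockT C)) → Option (ClockT C) := fun b =>
    match b with
    | none => none
    | some none => none
    | some (some k) => some k with hψ
  set Final : List (DAtom (Option (ClockT C))) :=
    (elimVar none (some none) L₁).map (mapVar ψ) with hFinal
  rw [zone_ssat]
  refine ⟨Final, Set.ext fun ν' => ?_⟩
  rw [hFinal, Set.mem_inter_iff, mem_upClosure_iff]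
  rw [Set.mem_setOf_eq, Set.mem_setOf_eq, ssat_mapVar, elimVar_iff']
  have key : ∀ (W : Option (Option (ClockT C)) → ℝ) (t : ℝ),
      W none = 0 → W (some none) = t → (∀ k, W (some (some k)) = ν' k) →
      (ssat W L₁ ↔ (0 < t ∧ (fun k => ν' k - t) ∈ Z ∧ ssat (extRef ν') M)) := by
    intro W t h0 hτ hk
    rw [hL₁, ssat_append, ssat_append]
    have e1 : W ∘ some = fun b => extRef (fun k => ν' k - t) b + t := by
      funext b
      match b with
      | none =>
        show W (some none) = _
        rw [hτ]; simp [extRef]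
      | some k =>
        show W (some (some k)) = _
        rw [hk]; simp [extRef]
    have e2 : W ∘ Option.map some = extRef ν' := by
      funext b
      match b with
      | none => exact h0
      | some k => exact hk k
    rw [ssat_mapVar, ssat_mapVar, e1, e2, ssat_shift]
    have e3 : ssat W [((none, some none, true, 0) : DAtom (Option (Option (ClockT C))))]
        ↔ 0 < t := by
      constructor
      · intro h
        have := h _ (List.mem_cons_self)
        simp only [dsat] at this
        rw [h0, hτ] at this
        simpa using this
      · intro h a ha
        rcases List.mem_cons.mp ha with rfl | hh
        · simp only [dsat]
          rw [h0, hτ]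
          simpa using h
        · simp at hh
    rw [e3, hLZ, Set.mem_setOf_eq]
    tauto
  constructor
  · rintro ⟨⟨t, htpos, hshift⟩, hM⟩
    refine ⟨fun b => match b with
      | none => 0
      | some none => t
      | some (some k) => ν' k, fun b hb => ?_, ?_⟩
    · match b with
      | none => rfl
      | some none => exact absurd rfl hb
      | some (some k) => rfl
    · exact (key _ t rfl rfl (fun k => rfl)).mpr ⟨htpos, hshift, hM⟩
  · rintro ⟨v, hv, hs⟩
    obtain ⟨h1, h2, h3⟩ := (key v (v (some none))
      (hv none (by simp)) rfl
      (fun k => hv (some (some k)) (by simp))).mp hs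
    exact ⟨⟨v (some none), h1, h2⟩, h3⟩


namespace Signal

variable {X : Type}

lemma pref_eq (σ : Signal X) (i : ℕ) : σ.pref i = ((σ.entries.map Prod.snd).take i).sum := by
  rw [pref, List.map_take]

lemma pref_mono (σ : Signal X) {i j : ℕ} (h : i ≤ j) : σ.pref i ≤ σ.pref j := by
  rw [pref_eq, pref_eq]
  set l := σ.entries.map Prod.snd with hl
  have hnn : ∀ x ∈ l, (0:ℝ) ≤ x := by
    intro x hx
    obtain ⟨e, he, rfl⟩ := List.mem_map.mp hx
    exact le_of_lt (σ.pos e he)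
  calc (l.take i).sum = ((l.take j).take i).sum := by rw [List.take_take, min_eq_left h]
    _ ≤ ((l.take j).take i).sum + ((l.take j).drop i).sum := by
        have : (0:ℝ) ≤ ((l.take j).drop i).sum := by
          apply List.sum_nonneg
          intro x hx
          exact hnn x (List.mem_of_mem_take (List.mem_of_mem_drop hx))
        linarith
    _ = (l.take j).sum := by rw [← List.sum_append, List.take_append_drop]

lemma pref_le_dur (σ : Signal X) (i : ℕ) : σ.pref i ≤ σ.dur := by
  have h := pref_mono σ (le_max_left i σ.entries.length)
  refine h.trans ?_
  have hlen : (σ.entries.map Prod.snd).length ≤ max i σ.entries.length := by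
    rw [List.length_map]; exact le_max_right _ _
  rw [pref_eq, List.take_of_length_le hlen, dur]

lemma valAt_of_lt (σ : Signal X) {i : ℕ} (h1 : 1 ≤ i) (h2 : i ≤ σ.len) {t : ℝ}
    (hl : σ.pref (i-1) < t) (hu : t < σ.pref i) : σ.valAt t = σ.val (i-1) := by
  rw [valAt]
  have hlen : i - 1 < (List.range σ.len).length := by
    rw [List.length_range]; omega
  have hidx : (List.range σ.len).findIdx (fun j => decide (t < σ.pref (j+1))) = i - 1 := by
    rw [List.findIdx_eq hlen]
    constructor
    · rw [List.getElem_range]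
      have he : i - 1 + 1 = i := by omega
      rw [he]
      exact decide_eq_true hu
    · intro j hj
      rw [List.getElem_range]
      have : σ.pref (j+1) ≤ σ.pref (i-1) := pref_mono σ (by omega)
      rw [decide_eq_false_iff_not]
      push_neg
      linarith
  rw [hidx]

end Signal


/-- Up-closure is monotone. -/
lemma upClosure_mono {C : Type} {Z₁ Z₂ : Set (ClockT C → ℝ)} (h : Z₁ ⊆ Z₂) :
    upClosure Z₁ ⊆ upClosure Z₂ := by
  rintro ν' ⟨ν, hν, τ, hτ, rfl⟩
  exact ⟨ν, h hν, τ, hτ, rfl⟩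

/-- The punctual stripe `{ν | ν(T) = r}` as a difference-constraint system. -/
lemma ssat_punct {C : Type} (r : ℝ) :
    {ν : ClockT C → ℝ | ssat (extRef ν)
      [((some none, none, false, r) : DAtom (Option (ClockT C))),
       ((none, some none, false, -r) : DAtom (Option (ClockT C)))]}
    = {ν : ClockT C → ℝ | ν none = r} := by
  ext ν
  simp only [Set.mem_setOf_eq, ssat]
  constructor
  · intro h
    have h1 := h _ (List.mem_cons_self)
    have h2 := h _ (List.mem_cons_of_mem _ (List.mem_cons_self))
    simp only [dsat, extRef] at h1 h2
    norm_num at h1 h2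
    linarith
  · intro h a ha
    rcases List.mem_cons.mp ha with rfl | ha'
    · simp [dsat, extRef, h]
    · rcases List.mem_cons.mp ha' with rfl | ha''
      · simp [dsat, extRef, h]
      · simp at ha''

/-- The open stripe `{ν | r₁ < ν(T) < r₂}` as a difference-constraint system. -/
lemma ssat_open {C : Type} (r₁ r₂ : ℝ) :
    {ν : ClockT C → ℝ | ssat (extRef ν)
      [((some none, none, true, r₂) : DAtom (Option (ClockT C))),
       ((none, some none, true, -r₁) : DAtom (Option (ClockT C)))]}
    = {ν : ClockT C → ℝ | r₁ < ν none ∧ ν none < r₂} := by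
  ext ν
  simp only [Set.mem_setOf_eq, ssat]
  constructor
  · intro h
    have h1 := h _ (List.mem_cons_self)
    have h2 := h _ (List.mem_cons_of_mem _ (List.mem_cons_self))
    simp only [dsat, extRef] at h1 h2
    norm_num at h1 h2
    exact ⟨by linarith, by linarith⟩
  · intro h a ha
    rcases List.mem_cons.mp ha with rfl | ha'
    · simp only [dsat, extRef]; norm_num; linarith [h.2]
    · rcases List.mem_cons.mp ha' with rfl | ha''
      · simp only [dsat, extRef]; norm_num; linarith [h.1]
      · simp at ha''

/-- In the WSTTS of `σ` and `W`: if `((l,Z₁,ā),(l',Z₁',ā')) ∈ →^sym`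
and `(l,Z₂,ā) ∈ Q^sym` with `Z₁ ⊆ Z₂`, then there exists `(l',Z₂',ā') ∈ Q^sym` with
`Z₁' ⊆ Z₂'` and `((l,Z₂,ā),(l',Z₂',ā')) ∈ →^sym`. -/
theorem statement7 {X L C S : Type} [Finite X] [Finite L] [Finite C]
    [CSemiring S] [CompleteCSemiring S]
    (W : TSWA X L C S) (σ : Signal X)
    (q q' : SymState X L C) (h : symStep σ W.toTSA q q')
    (Z₂ : Set (ClockT C → ℝ)) (hQ : (q.1, Z₂, q.2.2) ∈ symQ σ) (hsub : q.2.1 ⊆ Z₂) :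
    ∃ Z₂' : Set (ClockT C → ℝ), (q'.1, Z₂', q'.2.2) ∈ symQ σ ∧ q'.2.1 ⊆ Z₂' ∧
      symStep σ W.toTSA (q.1, Z₂, q.2.2) (q'.1, Z₂', q'.2.2) := by
  obtain ⟨hq, hq', hcase⟩ := h
  obtain ⟨hZone2, hNe2, hBd2, hSt2, hCond2⟩ := hQ
  obtain ⟨hZone1', hNe1', hBd1', hSt1', hCond1'⟩ := hq'
  rcases hcase with ⟨g, ρ, hΔ, hZ1', hane, ha'⟩ | ⟨hloc, ⟨ν, hν, ν', hν', hval⟩, i, hi1, hi2, hstripe⟩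
  · -- discrete transition
    set Z₂' := {ν' | ∃ ν ∈ Z₂, guardSat (fun c => ν (some c)) g ∧ ν' = symResetVal ν ρ}
      with hZ₂'
    have hsub' : q'.2.1 ⊆ Z₂' := by
      rw [hZ1']
      rintro w ⟨ν, hν, hg, rfl⟩
      exact ⟨ν, hsub hν, hg, rfl⟩
    refine ⟨Z₂', ⟨isZone_reset hZone2 g ρ, hNe1'.mono hsub', ?_, ?_, ?_⟩, hsub',
      ⟨⟨hZone2, hNe2, hBd2, hSt2, hCond2⟩,
       ⟨isZone_reset hZone2 g ρ, hNe1'.mono hsub', ?_, ?_, ?_⟩,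
       Or.inl ⟨g, ρ, hΔ, rfl, hane, ha'⟩⟩⟩
    · rintro w ⟨ν, hν, hg, rfl⟩
      exact hBd2 ν hν
    · show StutterFree q'.2.2
      exact hSt1'
    · exact Or.inl ha'
    · rintro w ⟨ν, hν, hg, rfl⟩
      exact hBd2 ν hν
    · show StutterFree q'.2.2
      rw [ha']
      exact List.isChain_nil
    · exact Or.inl ha'
  · -- time elapse
    rcases hstripe with hZ1' | hZ1'
    · -- punctual
      set Z₂' := upClosure Z₂ ∩ {ν | ν none = σ.pref i} with hZ₂'
      have hzone' : IsZone Z₂' := by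
        have := isZone_up hZone2
          [((some none, none, false, σ.pref i) : DAtom (Option (ClockT C))),
           ((none, some none, false, -(σ.pref i)) : DAtom (Option (ClockT C)))]
        rwa [ssat_punct] at this
      have hsub' : q'.2.1 ⊆ Z₂' := by
        rw [hZ1']
        exact Set.inter_subset_inter_left _ (upClosure_mono hsub)
      have hbd' : ∀ w ∈ Z₂', w none ≤ σ.dur := by
        rintro w ⟨-, hw2⟩
        rw [Set.mem_setOf_eq] at hw2
        rw [hw2]
        exact Signal.pref_le_dur σ i
      have hcond' : q'.2.2 = [] ∨ ∀ w ∈ Z₂', absCat q'.2.2 [σ.valAt (w none)] = q'.2.2 := by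
        rcases hCond1' with hc | hc
        · exact Or.inl hc
        · refine Or.inr fun w hw => ?_
          obtain ⟨ν₀, hν₀⟩ := hNe1'
          have h₀ := hc ν₀ hν₀
          rw [hZ1'] at hν₀
          obtain ⟨-, hν₀2⟩ := hν₀
          rw [Set.mem_setOf_eq] at hν₀2
          obtain ⟨-, hw2⟩ := hw
          rw [Set.mem_setOf_eq] at hw2
          rw [hw2, ← hν₀2]
          exact h₀
      have hν'₂ : ν' ∈ Z₂' := hsub' hν'
      exact ⟨Z₂', ⟨hzone', hNe1'.mono hsub', hbd', hSt1', hcond'⟩, hsub',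
        ⟨⟨hZone2, hNe2, hBd2, hSt2, hCond2⟩,
         ⟨hzone', hNe1'.mono hsub', hbd', hSt1', hcond'⟩,
         Or.inr ⟨hloc, ⟨ν, hsub hν, ν', hν'₂, hval⟩, i, hi1, hi2, Or.inl rfl⟩⟩⟩
    · -- non-punctual
      set Z₂' := upClosure Z₂ ∩ {ν | σ.pref (i-1) < ν none ∧ ν none < σ.pref i} with hZ₂'
      have hzone' : IsZone Z₂' := by
        have := isZone_up hZone2
          [((some none, none, true, σ.pref i) : DAtom (Option (ClockT C))),
           ((none, some none, true, -(σ.pref (i-1))) : DAtom (Option (ClockT C)))]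
        rwa [ssat_open] at this
      have hsub' : q'.2.1 ⊆ Z₂' := by
        rw [hZ1']
        exact Set.inter_subset_inter_left _ (upClosure_mono hsub)
      have hbd' : ∀ w ∈ Z₂', w none ≤ σ.dur := by
        rintro w ⟨-, hw2⟩
        rw [Set.mem_setOf_eq] at hw2
        exact le_of_lt (lt_of_lt_of_le hw2.2 (Signal.pref_le_dur σ i))
      have hcond' : q'.2.2 = [] ∨ ∀ w ∈ Z₂', absCat q'.2.2 [σ.valAt (w none)] = q'.2.2 := by
        rcases hCond1' with hc | hc
        · exact Or.inl hc
        · refine Or.inr fun w hw => ?_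
          obtain ⟨ν₀, hν₀⟩ := hNe1'
          have h₀ := hc ν₀ hν₀
          rw [hZ1'] at hν₀
          obtain ⟨-, hν₀2⟩ := hν₀
          rw [Set.mem_setOf_eq] at hν₀2
          obtain ⟨-, hw2⟩ := hw
          rw [Set.mem_setOf_eq] at hw2
          rw [Signal.valAt_of_lt σ hi1 hi2 hw2.1 hw2.2,
            ← Signal.valAt_of_lt σ hi1 hi2 hν₀2.1 hν₀2.2]
          exact h₀
      have hν'₂ : ν' ∈ Z₂' := hsub' hν'
      exact ⟨Z₂', ⟨hzone', hNe1'.mono hsub', hbd', hSt1', hcond'⟩, hsub',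
        ⟨⟨hZone2, hNe2, hBd2, hSt2, hCond2⟩,
         ⟨hzone', hNe1'.mono hsub', hbd', hSt1', hcond'⟩,
         Or.inr ⟨hloc, ⟨ν, hsub hν, ν', hν'₂, hval⟩, i, hi1, hi2, Or.inr rfl⟩⟩⟩

end QTPM
end

section
/- Let σ be a signal with aᵢ≠a_{i+1} for all i, W a TSWA over ℝ and a complete semiring 𝕊, S the WTTS and S^sym the WSTTS of σ and W. If 𝕊 is idempotent, then α^sym(S^sym) ⪯ α(S), where ⪯ is the canonical order of 𝕊 (s ⪯ s' iff s⊕s' = s'). -/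
attribute [local instance] Classical.propDecidable

namespace QTPM

section Toolkit
variable {S : Type} [CSemiring S] [CompleteCSemiring S]

open CSemiring CompleteCSemiring

set_option linter.unusedSectionVars false

lemma zero_add' (a : S) : add zero a = a := by
  rw [CSemiring.add_comm]; exact add_zero a

lemma iSum_congr {ι : Type} {f g : ι → S} (h : ∀ i, f i = g i) :
    iSum f = iSum g := congrArg iSum (funext h)

lemma iSum_T1 (h : {u : Unit // u = ()} → S) : iSum h = h ⟨(), rfl⟩ := by
  have h1 := iSum_partition (fun u : Unit => u) (fun _ : Unit => h ⟨(), rfl⟩)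
  rw [iSum_single, iSum_single] at h1
  have h2 : (fun _ : {u : Unit // u = ()} => h ⟨(), rfl⟩) = h := by
    funext x
    have hx : (⟨(), rfl⟩ : {u : Unit // u = ()}) = x := by
      apply Subtype.ext
      exact Subsingleton.elim _ _
    exact congrArg h hx
  exact (h1.trans (congrArg iSum h2)).symm

lemma iSum_trueSub (q : Unit → Prop) (hq : q ()) (s : S) :
    iSum (fun _ : {u : Unit // q u} => s) = s := by
  have hqe : q = fun u : Unit => u = () := by
    funext u
    cases u
    exact propext ⟨fun _ => rfl, fun _ => hq⟩
  subst hqe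
  exact iSum_T1 (fun _ => s)

lemma iSum_unique {T : Type} (hT : ∀ x y : T, x = y) (t0 : T) (f : T → S) :
    iSum f = f t0 := by
  have stepC : ∀ s : S, iSum (fun _ : T => s) = s := by
    intro s
    have h1 := iSum_partition (fun _ : Unit => t0) (fun _ : Unit => s)
    rw [iSum_single] at h1
    have h2 : (fun k : T => iSum (fun _ : {u : Unit // t0 = k} => s))
        = fun _ : T => s := by
      funext k
      exact iSum_trueSub (fun _ => t0 = k) (hT t0 k) s
    rw [h2] at h1
    exact h1.symm
  have hf : f = fun _ : T => f t0 := funext fun x => by rw [hT x t0]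
  rw [hf]
  exact stepC (f t0)

lemma iSum_equiv {ι κ : Type} (e : ι ≃ κ) (f : κ → S) :
    iSum (fun i => f (e i)) = iSum f := by
  have h1 := iSum_partition (fun i : ι => e i) (fun i : ι => f (e i))
  have h2 : (fun k : κ => iSum (fun i : {i : ι // e i = k} => f (e i.1)))
      = fun k : κ => f k := by
    funext k
    have hu : ∀ x y : {i : ι // e i = k}, x = y := by
      rintro ⟨x, hx⟩ ⟨y, hy⟩
      exact Subtype.ext (e.injective (hx.trans hy.symm))
    rw [iSum_unique hu ⟨e.symm k, e.apply_symm_apply k⟩]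
    simp
  rw [h1, h2]

lemma iSum_reindex {ι κ : Type} (f : ι → S) (g : κ → S) (tf : ι → κ) (inv : κ → ι)
    (h1 : ∀ k, tf (inv k) = k) (h2 : ∀ i, inv (tf i) = i)
    (hfg : ∀ i, f i = g (tf i)) : iSum f = iSum g := by
  have he := iSum_equiv (⟨tf, inv, h2, h1⟩ : ι ≃ κ) g
  simp only [Equiv.coe_fn_mk] at he
  exact (iSum_congr hfg).trans he

lemma iSum_isEmpty {T : Type} [IsEmpty T] (f : T → S) : iSum f = zero := by
  have h1 := iSum_partition (fun t : T => (isEmptyElim t : Empty)) f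
  rw [h1, iSum_congr (fun k : Empty => k.elim), iSum_empty (fun _ => zero)]

lemma iSum_add {B : Type} (h h' : B → S) :
    add (iSum h) (iSum h') = iSum (fun b => add (h b) (h' b)) := by
  set H : B × Bool → S := fun x => cond x.2 (h x.1) (h' x.1) with hH
  have A1 := iSum_partition (fun x : B × Bool => x.2) H
  rw [iSum_pair] at A1
  have ht : iSum (fun x : {x : B × Bool // x.2 = true} => H x.1) = iSum h := by
    refine iSum_reindex _ _ (fun x => x.1.1) (fun b => ⟨(b, true), rfl⟩)
      (fun b => rfl) ?_ ?_
    · rintro ⟨⟨b, c⟩, hc⟩; cases hc; rfl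
    · rintro ⟨⟨b, c⟩, hc⟩; cases hc; rfl
  have hf : iSum (fun x : {x : B × Bool // x.2 = false} => H x.1) = iSum h' := by
    refine iSum_reindex _ _ (fun x => x.1.1) (fun b => ⟨(b, false), rfl⟩)
      (fun b => rfl) ?_ ?_
    · rintro ⟨⟨b, c⟩, hc⟩; cases hc; rfl
    · rintro ⟨⟨b, c⟩, hc⟩; cases hc; rfl
  have A2 := iSum_partition (fun x : B × Bool => x.1) H
  have h3 : (fun b : B => iSum (fun x : {x : B × Bool // x.1 = b} => H x.1))
      = fun b : B => add (h b) (h' b) := by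
    funext b
    have hb : iSum (fun x : {x : B × Bool // x.1 = b} => H x.1)
        = iSum (fun c : Bool => cond c (h b) (h' b)) := by
      refine iSum_reindex _ _ (fun x => x.1.2) (fun c => ⟨(b, c), rfl⟩)
        (fun c => rfl) ?_ ?_
      · rintro ⟨⟨b', c⟩, hb'⟩; cases hb'; rfl
      · rintro ⟨⟨b', c⟩, hb'⟩; cases hb'; rfl
    rw [hb, iSum_pair]
    rfl
  rw [A2, h3] at A1
  rw [ht, hf] at A1
  exact A1.symm

lemma iSum_const_fin (hid : Idem S) : ∀ (n : ℕ) (s : S),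
    iSum (fun _ : Fin (n + 1) => s) = s := by
  intro n
  induction n with
  | zero =>
    intro s
    refine iSum_unique ?_ 0 (fun _ => s)
    intro x y
    have hx := x.2
    have hy := y.2
    ext
    omega
  | succ n IH =>
    intro s
    have hp := iSum_partition (fun x : Fin (n + 2) => decide (x = 0)) (fun _ => s)
    rw [iSum_pair] at hp
    have h0 : iSum (fun _ : {x : Fin (n + 2) // decide (x = 0) = true} => s) = s := by
      refine iSum_unique ?_ ⟨0, by simp⟩ _
      rintro ⟨x, hx⟩ ⟨y, hy⟩
      apply Subtype.ext
      exact (of_decide_eq_true hx).trans (of_decide_eq_true hy).symm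
    have h1 : iSum (fun _ : {x : Fin (n + 2) // decide (x = 0) = false} => s) = s := by
      have hr : iSum (fun _ : {x : Fin (n + 2) // decide (x = 0) = false} => s)
          = iSum (fun _ : Fin (n + 1) => s) := by
        refine iSum_reindex _ _
          (fun x => (x.1).pred (of_decide_eq_false x.2))
          (fun i => ⟨i.succ, decide_eq_false (Fin.succ_ne_zero i)⟩) ?_ ?_ (fun _ => rfl)
        · intro i; simp
        · rintro ⟨x, hx⟩; apply Subtype.ext; simp
      rw [hr]
      exact IH s
    rw [h0, h1] at hp
    exact hp ▸ (hid s)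

lemma iSum_const_finite {T : Type} [Finite T] (hne : Nonempty T) (hid : Idem S) (s : S) :
    iSum (fun _ : T => s) = s := by
  obtain ⟨n, ⟨e⟩⟩ := Finite.exists_equiv_fin T
  cases n with
  | zero => exact (e hne.some).elim0
  | succ n =>
    have hr : iSum (fun _ : T => s) = iSum (fun _ : Fin (n + 1) => s) :=
      iSum_reindex _ _ e e.symm (fun k => e.apply_symm_apply k)
        (fun i => e.symm_apply_apply i) (fun _ => rfl)
    rw [hr]
    exact iSum_const_fin hid n s

end Toolkit

end QTPM
namespace QTPM

section Extract

variable {X L C : Type}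

/-- Concrete state built from a symbolic state and a valuation. -/
def mkW (q : SymState X L C) (ν : ClockT C → ℝ) : WState X L C :=
  (q.1, restrC ν, ν none, q.2.2)

/-- All valuations in the zone have their `T`-value in a common cell. -/
def CellCond (σ : Signal X) (Z : Set (ClockT C → ℝ)) : Prop :=
  (∃ r : ℝ, ∀ ν ∈ Z, ν none = r) ∨
  (∃ j : ℕ, ∀ ν ∈ Z, σ.pref j < ν none ∧ ν none < σ.pref (j + 1))

/-- Zone invariant along symbolic runs. -/
def GoodZ (σ : Signal X) (q : SymState X L C) : Prop :=
  (∀ ν ∈ q.2.1, ∀ c, 0 ≤ ν c) ∧ CellCond σ q.2.1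

lemma pref_mono (σ : Signal X) : Monotone σ.pref := by
  intro n m hnm
  have h := List.take_append_drop n (σ.entries.take m)
  rw [List.take_take, min_eq_left hnm] at h
  unfold Signal.pref
  rw [← h, List.map_append, List.sum_append]
  have h0 : 0 ≤ (((σ.entries.take m).drop n).map Prod.snd).sum := by
    apply List.sum_nonneg
    intro x hx
    rw [List.mem_map] at hx
    obtain ⟨e, he, rfl⟩ := hx
    exact le_of_lt (σ.pos e (List.mem_of_mem_take (List.mem_of_mem_drop he)))
  linarith

lemma cell_lt_pref_iff (σ : Signal X) {t t' : ℝ} {j : ℕ}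
    (ht : σ.pref j < t ∧ t < σ.pref (j + 1))
    (ht' : σ.pref j < t' ∧ t' < σ.pref (j + 1)) (m : ℕ) :
    ((t < σ.pref m) ↔ (t' < σ.pref m)) ∧ ((σ.pref m < t) ↔ (σ.pref m < t')) := by
  constructor
  · by_cases hm : j + 1 ≤ m
    · have := pref_mono σ hm
      constructor <;> intro <;> linarith [ht.2, ht'.2]
    · have hm' : m ≤ j := by omega
      have := pref_mono σ hm'
      constructor <;> intro <;> linarith [ht.1, ht'.1]
  · by_cases hm : m ≤ j
    · have := pref_mono σ hm
      constructor <;> intro <;> linarith [ht.1, ht'.1]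
    · have hm' : j + 1 ≤ m := by omega
      have := pref_mono σ hm'
      constructor <;> intro <;> linarith [ht.2, ht'.2]

lemma valuesOn_congr (σ : Signal X) {t t2 t' t2' : ℝ}
    (h : ∀ i ∈ List.range σ.len,
      ((σ.pref i < t' ∧ t < σ.pref (i + 1)) ↔ (σ.pref i < t2' ∧ t2 < σ.pref (i + 1)))) :
    σ.valuesOn t t' = σ.valuesOn t2 t2' := by
  unfold Signal.valuesOn
  congr 1
  congr 1
  apply List.filter_congr
  intro i hi
  exact decide_eq_decide.mpr (h i hi)

lemma cells_valuesOn_eq (σ : Signal X) {Z Z' : Set (ClockT C → ℝ)}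
    (hc : CellCond σ Z) (hc' : CellCond σ Z')
    {μ ν μ' ν' : ClockT C → ℝ} (hμ : μ ∈ Z) (hν : ν ∈ Z) (hμ' : μ' ∈ Z') (hν' : ν' ∈ Z') :
    σ.valuesOn (μ none) (μ' none) = σ.valuesOn (ν none) (ν' none) := by
  have hL : ∀ m : ℕ, (μ none < σ.pref m ↔ ν none < σ.pref m) := by
    rcases hc with ⟨r, hr⟩ | ⟨j, hj⟩
    · intro m; rw [hr μ hμ, hr ν hν]
    · intro m; exact (cell_lt_pref_iff σ (hj μ hμ) (hj ν hν) m).1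
  have hR : ∀ m : ℕ, (σ.pref m < μ' none ↔ σ.pref m < ν' none) := by
    rcases hc' with ⟨r, hr⟩ | ⟨j, hj⟩
    · intro m; rw [hr μ' hμ', hr ν' hν']
    · intro m; exact (cell_lt_pref_iff σ (hj μ' hμ') (hj ν' hν') m).2
  exact valuesOn_congr σ (fun i _ => and_congr (hR i) (hL (i + 1)))

lemma goodZ_step (σ : Signal X) (A : TSA X L C) {q q' : SymState X L C}
    (h : symStep σ A q q') (hq : GoodZ σ q) : GoodZ σ q' := by
  obtain ⟨-, -, hcase⟩ := h
  rcases hcase with ⟨g, ρ, hΔ, hZ', hne, hnil⟩ | ⟨hl, hvals, i, h1i, hile, hcell⟩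
  · constructor
    · intro ν' hν' c
      rw [hZ'] at hν'
      obtain ⟨ν, hν, hg, rfl⟩ := hν'
      cases c with
      | none => exact hq.1 ν hν none
      | some c' =>
        dsimp [symResetVal]
        split
        · exact le_refl 0
        · exact hq.1 ν hν _
    · rcases hq.2 with ⟨r, hr⟩ | ⟨j, hj⟩
      · left
        refine ⟨r, ?_⟩
        intro ν' hν'
        rw [hZ'] at hν'
        obtain ⟨ν, hν, hg, rfl⟩ := hν'
        exact hr ν hν
      · right
        refine ⟨j, ?_⟩
        intro ν' hν'
        rw [hZ'] at hν'
        obtain ⟨ν, hν, hg, rfl⟩ := hν'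
        exact hj ν hν
  · constructor
    · intro ν' hν' c
      have hup : ν' ∈ upClosure q.2.1 := by
        rcases hcell with h' | h' <;> (rw [h'] at hν'; exact hν'.1)
      obtain ⟨ν, hν, τ, hτ, rfl⟩ := hup
      have := hq.1 ν hν c
      dsimp only
      linarith
    · rcases hcell with h' | h'
      · left
        refine ⟨σ.pref i, ?_⟩
        intro ν' hν'
        rw [h'] at hν'
        exact hν'.2
      · right
        refine ⟨i - 1, ?_⟩
        intro ν' hν'
        rw [h'] at hν'
        have h2 := hν'.2
        rw [Nat.sub_add_cancel h1i]
        exact h2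

lemma goodZ_init (σ : Signal X) (A : TSA X L C) {q : SymState X L C}
    (hq : q ∈ symQ0 A) : GoodZ σ q := by
  obtain ⟨h0, hZ, hε⟩ := hq
  constructor
  · intro ν hν c
    rw [hZ, Set.mem_singleton_iff] at hν
    subst hν
    exact le_refl 0
  · left
    refine ⟨0, ?_⟩
    intro ν hν
    rw [hZ, Set.mem_singleton_iff] at hν
    subst hν
    rfl

lemma chain_inv {Q : Type} (step : Q → Q → Prop) (inv : Q → Prop)
    (pres : ∀ a b, step a b → inv a → inv b) :
    ∀ (l : List Q), l.Chain' step → (∀ h ∈ l.head?, inv h) → ∀ q ∈ l, inv q := by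
  intro l
  induction l with
  | nil => intro _ _ q hq; simp at hq
  | cons a rest IH =>
    intro hch hhd q hq
    have ha : inv a := hhd a rfl
    unfold List.Chain' at hch
    rw [List.isChain_cons] at hch
    rw [List.mem_cons] at hq
    rcases hq with rfl | hq
    · exact ha
    · refine IH hch.2 ?_ q hq
      intro h hh
      exact pres a h (hch.1 h hh) ha

lemma mkW_mem_wttsQ (σ : Signal X) {q : SymState X L C} {ν : ClockT C → ℝ}
    (hq : q ∈ symQ σ) (hν : ν ∈ q.2.1) (hpos : ∀ c, 0 ≤ ν c) :
    mkW q ν ∈ wttsQ (L := L) (C := C) σ :=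
  ⟨fun c => hpos (some c), hpos none, hq.2.2.1 ν hν, hq.2.2.2.1⟩

lemma edge_back (σ : Signal X) (A : TSA X L C) {q q' : SymState X L C}
    (h : symStep σ A q q') (hgq : GoodZ σ q) (hgq' : GoodZ σ q')
    {ν' : ClockT C → ℝ} (hν' : ν' ∈ q'.2.1) :
    ∃ ν ∈ q.2.1, wttsStep σ A (mkW q ν) (mkW q' ν') := by
  obtain ⟨hq, hq', hcase⟩ := h
  rcases hcase with ⟨g, ρ, hΔ, hZ', hne, hnil⟩ | ⟨hl, ⟨μ, hμ, μ', hμ', habs⟩, i, h1i, hile, hcell⟩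
  · have hν'' := hν'
    rw [hZ'] at hν''
    obtain ⟨ν, hν, hg, hres⟩ := hν''
    refine ⟨ν, hν, mkW_mem_wttsQ σ hq hν (hgq.1 ν hν),
      mkW_mem_wttsQ σ hq' hν' (hgq'.1 ν' hν'), Or.inl ⟨g, ρ, hΔ, hg, ?_, ?_, hne, hnil⟩⟩
    · show restrC ν' = resetVal (restrC ν) ρ
      rw [hres]
      funext c
      rfl
    · show ν' none = ν none
      rw [hres]
      rfl
  · have hup : ν' ∈ upClosure q.2.1 := by
      rcases hcell with h' | h' <;> (rw [h'] at hν'; exact hν'.1)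
    obtain ⟨ν, hν, τ, hτ, hup'⟩ := hup
    refine ⟨ν, hν, mkW_mem_wttsQ σ hq hν (hgq.1 ν hν),
      mkW_mem_wttsQ σ hq' hν' (hgq'.1 ν' hν'), Or.inr ⟨hl, τ, hτ, ?_, ?_, ?_⟩⟩
    · show restrC ν' = fun c => restrC ν c + τ
      rw [hup']
      rfl
    · show ν' none = ν none + τ
      rw [hup']
    · show q'.2.2 = absCat q.2.2 (σ.valuesOn (ν none) (ν none + τ))
      rw [habs, cells_valuesOn_eq σ hgq.2 hgq'.2 hμ hν hμ' hν']
      congr 1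
      congr 1
      rw [hup']

end Extract

section ExtractChain

variable {X L C S : Type} [CSemiring S] [CompleteCSemiring S]

lemma pathVal_cons_cons (w : WState X L C → WState X L C → S) (a b : WState X L C)
    (l : List (WState X L C)) :
    pathVal w (a :: b :: l) = CSemiring.mul (w a b) (pathVal w (b :: l)) := rfl

lemma extract (σ : Signal X) (W : TSWA X L C S) :
    ∀ (π : List (SymState X L C)) (qn : SymState X L C),
      π.Chain' (symStep σ W.toTSA) → (∀ q ∈ π, GoodZ σ q) → π.getLast? = some qn →
      ∀ νn ∈ qn.2.1, ∃ (ψ : List (WState X L C)) (q0 : SymState X L C)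
        (ν0 : ClockT C → ℝ),
        ψ.length = π.length ∧ ψ.Chain' (wttsStep σ W.toTSA) ∧ π.head? = some q0 ∧
        ν0 ∈ q0.2.1 ∧ ψ.head? = some (mkW q0 ν0) ∧ ψ.getLast? = some (mkW qn νn) ∧
        pathVal (wttsWeight W) ψ = pathVal (symWeight W) π := by
  intro π
  induction π with
  | nil => intro qn _ _ hlast; simp at hlast
  | cons q rest IH =>
    intro qn hch hgood hlast νn hνn
    cases rest with
    | nil =>
      have hq : q = qn := by simpa using hlast
      subst hq
      exact ⟨[mkW q νn], q, νn, rfl, List.isChain_singleton _, rfl, hνn, rfl, rfl, rfl⟩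
    | cons q' rest' =>
      unfold List.Chain' at hch
      rw [List.isChain_cons_cons] at hch
      rw [List.getLast?_cons_cons] at hlast
      obtain ⟨ψ', q0', ν1, hlen, hch', hhd', hν1, hψhd, hψlast, hval⟩ :=
        IH qn hch.2 (fun x hx => hgood x (List.mem_cons_of_mem _ hx)) hlast νn hνn
      have hq0' : q0' = q' := by simpa using hhd'.symm
      rw [hq0'] at hν1 hψhd
      obtain ⟨ν0, hν0, hstep⟩ := edge_back σ W.toTSA hch.1
        (hgood q (by simp)) (hgood q' (by simp)) hν1
      obtain ⟨y, t, rfl⟩ : ∃ y t, ψ' = y :: t := by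
        cases ψ' with
        | nil => simp at hψhd
        | cons y t => exact ⟨y, t, rfl⟩
      have hy : y = mkW q' ν1 := by simpa using hψhd
      subst hy
      refine ⟨mkW q ν0 :: mkW q' ν1 :: t, q, ν0, by simpa using hlen, ?_, rfl, hν0,
        rfl, by rw [List.getLast?_cons_cons]; exact hψlast, ?_⟩
      · unfold List.Chain'
        rw [List.isChain_cons_cons]
        exact ⟨hstep, hch'⟩
      · rw [pathVal_cons_cons, hval]
        rfl

end ExtractChain

end QTPM
namespace QTPM

section Finiteness

variable {X L C : Type}

lemma succs_finite [Finite L] (σ : Signal X) (A : TSA X L C) (q : SymState X L C) :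
    {q' : SymState X L C | symStep σ A q q'}.Finite := by
  classical
  have hS1 : ((fun d : L × Guard C × Set C × L =>
      ((d.2.2.2 : L),
        ({ν' | ∃ ν ∈ q.2.1, guardSat (fun c => ν (some c)) d.2.1 ∧
          ν' = symResetVal ν d.2.2.1} : Set (ClockT C → ℝ)),
        ([] : List (X → ℝ)))) '' A.Δ).Finite := A.Δ_finite.image _
  have hZE : (⋃ i ∈ Set.Icc 1 σ.len,
      ({upClosure q.2.1 ∩ {ν | ν none = σ.pref i},
        upClosure q.2.1 ∩ {ν | σ.pref (i - 1) < ν none ∧ ν none < σ.pref i}} :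
        Set (Set (ClockT C → ℝ)))).Finite :=
    (Set.finite_Icc 1 σ.len).biUnion (fun i _ => (Set.finite_singleton _).insert _)
  have hVS : ((fun l : List ℕ => absCat q.2.2 (List.destutter (· ≠ ·) (l.map σ.val))) ''
      {l | l ∈ (List.range σ.len).sublists}).Finite :=
    (List.finite_toSet _).image _
  refine Set.Finite.subset (hS1.union ((hZE.prod hVS).image
    (fun p : Set (ClockT C → ℝ) × List (X → ℝ) => ((q.1 : L), p.1, p.2)))) ?_
  rintro q' ⟨hq, hq', hcase⟩
  rcases hcase with ⟨g, ρ, hΔ, hZ', hne, hnil⟩ | ⟨hl, ⟨μ, hμ, μ', hμ', habs⟩, i, h1i, hile, hcell⟩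
  · left
    refine ⟨(q.1, g, ρ, q'.1), hΔ, ?_⟩
    dsimp only
    rw [← hZ', ← hnil]
  · right
    refine ⟨(q'.2.1, q'.2.2), ⟨?_, ?_⟩, ?_⟩
    · refine Set.mem_biUnion (Set.mem_Icc.mpr ⟨h1i, hile⟩) ?_
      rcases hcell with h' | h'
      · rw [h']; exact Set.mem_insert _ _
      · rw [h']; exact Set.mem_insert_of_mem _ rfl
    · refine ⟨(List.range σ.len).filter
        (fun i => decide (σ.pref i < μ' none ∧ μ none < σ.pref (i + 1))), ?_, ?_⟩
      · exact List.mem_sublists.mpr List.filter_sublist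
      · exact habs.symm
    · dsimp only
      rw [hl]

lemma symQ0_finite [Finite L] (A : TSA X L C) : (symQ0 (X := X) A).Finite := by
  refine Set.Finite.subset ((Set.finite_univ (α := L)).image
    (fun l : L => ((l, ({zeroValT} : Set (ClockT C → ℝ)), ([] : List (X → ℝ))) :
      SymState X L C))) ?_
  rintro q ⟨h1, h2, h3⟩
  exact ⟨q.1, trivial, by dsimp only; rw [← h2, ← h3]⟩

lemma pathsFrom_finite [Finite L] (σ : Signal X) (A : TSA X L C) :
    ∀ (n : ℕ) (s : Set (SymState X L C)), s.Finite →
      {π : List (SymState X L C) | π.length = n ∧ π.Chain' (symStep σ A) ∧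
        ∀ h ∈ π.head?, h ∈ s}.Finite := by
  intro n
  induction n with
  | zero =>
    intro s _
    refine Set.Finite.subset (Set.finite_singleton ([] : List (SymState X L C))) ?_
    intro π hπ
    have := hπ.1
    rw [List.length_eq_zero_iff] at this
    simpa using this
  | succ n IH =>
    intro s hs
    refine Set.Finite.subset (hs.biUnion (fun a _ =>
      (IH {q' | symStep σ A a q'} (succs_finite σ A a)).image (List.cons a))) ?_
    intro π hπ
    obtain ⟨hlen, hch, hhd⟩ := hπ
    cases π with
    | nil => simp at hlen
    | cons a rest =>
      unfold List.Chain' at hch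
      rw [List.isChain_cons] at hch
      refine Set.mem_biUnion (hhd a rfl) ⟨rest, ⟨?_, hch.2, ?_⟩, rfl⟩
      · simpa using hlen
      · intro h hh
        exact hch.1 h hh

end Finiteness

end QTPM
namespace QTPM

lemma mem_of_getLast?' {α : Type} : ∀ {l : List α} {a : α}, l.getLast? = some a → a ∈ l
  | [], a, h => by simp at h
  | [x], a, h => by
    have hx : x = a := by simpa using h
    subst hx
    exact List.mem_singleton_self x
  | x :: y :: t, a, h => by
    rw [List.getLast?_cons_cons] at h
    exact List.mem_cons_of_mem x (mem_of_getLast?' h)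

/-- Let `σ` be a signal with `aᵢ ≠ a_{i+1}`, `W` a TSWA over `ℝ` and
a complete semiring `S`, `S` the WTTS and `S^sym` the WSTTS of `σ` and `W`. If the
semiring is idempotent then `α^sym(S^sym) ⪯ α(S)` in the canonical order. -/
theorem statement15 {X L C S : Type} [Finite X] [Finite L] [Finite C]
    [CSemiring S] [CompleteCSemiring S]
    (W : TSWA X L C S) (σ : Signal X)
    (hstutter : (σ.entries.map Prod.fst).Chain' (· ≠ ·))
    (hidem : Idem S) :
    csLe (symTraceValue σ W) (traceValue σ W) := by
  classical
  set SA : Set (List (SymState X L C)) :=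
    PathsBetween (symStep σ W.toTSA) (symQ0 W.toTSA) (symQF σ W.toTSA) with hSA
  set SB : Set (List (WState X L C)) :=
    PathsBetween (wttsStep σ W.toTSA) (wttsQ0 W.toTSA) (wttsQF σ W.toTSA) with hSB
  -- realization map
  have hreal : ∀ a : ↥SA, ∃ b : ↥SB,
      pathVal (wttsWeight W) b.1 = pathVal (symWeight W) a.1 ∧ b.1.length = a.1.length := by
    rintro ⟨π, hπch, ⟨a0, ha0, hhd⟩, ⟨bF, hbF, hlastF⟩⟩
    have hgood : ∀ qq ∈ π, GoodZ σ qq := by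
      refine chain_inv (symStep σ W.toTSA) (GoodZ σ)
        (fun a b hab ha => goodZ_step σ W.toTSA hab ha) π hπch ?_
      intro h hh
      rw [hhd] at hh
      have : a0 = h := by simpa using hh
      subst this
      exact goodZ_init σ W.toTSA ha0
    obtain ⟨hQF, hLF, hnilF, νn, hνn, hdur⟩ := hbF
    obtain ⟨ψ, q0, ν0, hlen, hch, hhd0, hν0, hψhd, hψlast, hval⟩ :=
      extract σ W π bF hπch hgood hlastF νn hνn
    have hq0 : q0 = a0 := by
      rw [hhd0] at hhd
      simpa using hhd
    subst hq0
    obtain ⟨hL0, hZ0, hε0⟩ := ha0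
    have hν0' : ν0 = zeroValT := by
      rw [hZ0, Set.mem_singleton_iff] at hν0
      exact hν0
    have hbFmem : bF ∈ π := mem_of_getLast?' hlastF
    have hb : ψ ∈ SB := by
      refine ⟨hch, ⟨mkW q0 ν0, ?_, hψhd⟩, ⟨mkW bF νn, ?_, hψlast⟩⟩
      · exact ⟨hL0, by rw [hν0']; rfl, by rw [hν0']; rfl, hε0⟩
      · exact ⟨hLF, fun c => (hgood bF hbFmem).1 νn hνn (some c), hdur, hnilF⟩
    exact ⟨⟨ψ, hb⟩, hval, hlen⟩
  choose F hF using hreal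
  -- fibers of F are finite
  have hfib : ∀ b : ↥SB, Finite {a : ↥SA // F a = b} := by
    intro b
    have hPF : {π : List (SymState X L C) | π.length = b.1.length ∧
        π.Chain' (symStep σ W.toTSA) ∧ ∀ h ∈ π.head?, h ∈ symQ0 W.toTSA}.Finite :=
      pathsFrom_finite σ W.toTSA b.1.length (symQ0 W.toTSA) (symQ0_finite W.toTSA)
    haveI := hPF.to_subtype
    refine Finite.of_injective (fun x : {a : ↥SA // F a = b} =>
      (⟨x.1.1, ?_, ?_, ?_⟩ : {π : List (SymState X L C) | π.length = b.1.length ∧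
        π.Chain' (symStep σ W.toTSA) ∧ ∀ h ∈ π.head?, h ∈ symQ0 W.toTSA})) ?_
    · rw [← (hF x.1).2, x.2]
    · exact x.1.2.1
    · intro h hh
      obtain ⟨-, ⟨a0, ha0, hhd⟩, -⟩ := x.1.2
      rw [hhd] at hh
      have : a0 = h := by simpa using hh
      exact this ▸ ha0
    · intro x y hxy
      apply Subtype.ext
      apply Subtype.ext
      simpa using congrArg Subtype.val hxy
  -- the sums
  have e1 : symTraceValue σ W =
      CompleteCSemiring.iSum (fun a : ↥SA => pathVal (symWeight W) a.1) := rfl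
  have e2 : traceValue σ W =
      CompleteCSemiring.iSum (fun b : ↥SB => pathVal (wttsWeight W) b.1) := rfl
  show CSemiring.add (symTraceValue σ W) (traceValue σ W) = traceValue σ W
  rw [e1, e2]
  rw [CompleteCSemiring.iSum_partition F (fun a : ↥SA => pathVal (symWeight W) a.1)]
  rw [iSum_add]
  refine iSum_congr ?_
  intro b
  by_cases hne : Nonempty {a : ↥SA // F a = b}
  · have hconst : (fun a : {a : ↥SA // F a = b} => pathVal (symWeight W) a.1.1)
        = fun _ => pathVal (wttsWeight W) b.1 := by
      funext a
      rw [← (hF a.1).1, a.2]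
    haveI := hfib b
    rw [hconst, iSum_const_finite hne hidem]
    exact hidem _
  · haveI := not_nonempty_iff.mp hne
    rw [iSum_isEmpty]
    exact zero_add' _

end QTPM
end
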